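/- Up to isomorphism, there are exactly two connected simple graphs with 7 vertices and 10 edges that have K₃,₃ as a minor: the graph E obtained from K₃,₃ by subdividing one edge once, and the graph E′ obtained from K₃,₃ by attaching one pendant vertex (a new vertex joined by a single edge to a vertex of K₃,₃). -/

import Mathlib

set_option maxHeartbeats 1000000

def IsMinor {W V : Type} (H : SimpleGraph W) (G : SimpleGraph V) : Prop :=
  ∃ B : W → Set V,
    (∀ w, (B w).Nonempty) ∧
    (∀ w, (G.induce (B w)).Connected) ∧
    (∀ w₁ w₂, w₁ ≠ w₂ → Disjoint (B w₁) (B w₂)) ∧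
    (∀ w₁ w₂, H.Adj w₁ w₂ → ∃ u ∈ B w₁, ∃ x ∈ B w₂, G.Adj u x)

def K33 : SimpleGraph (Fin 3 ⊕ Fin 3) := completeBipartiteGraph (Fin 3) (Fin 3)

def subdivide {V : Type} (G : SimpleGraph V) (u w : V) : SimpleGraph (V ⊕ Unit) :=
  SimpleGraph.fromEdgeSet
    ((Sym2.map Sum.inl '' (G.edgeSet \ {s(u, w)})) ∪
      {s(Sum.inl u, Sum.inr ()), s(Sum.inr (), Sum.inl w)})

def Egraph : SimpleGraph ((Fin 3 ⊕ Fin 3) ⊕ Unit) :=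
  subdivide K33 (Sum.inl 0) (Sum.inr 0)

def E'graph : SimpleGraph ((Fin 3 ⊕ Fin 3) ⊕ Unit) :=
  SimpleGraph.fromEdgeSet
    ((Sym2.map Sum.inl '' K33.edgeSet) ∪ {s(Sum.inl (Sum.inl 0), Sum.inr ())})

abbrev V7 := (Fin 3 ⊕ Fin 3) ⊕ Unit

def eAdjB : V7 → V7 → Bool
| .inl (.inl a), .inl (.inr b) => !(a = 0 && b = 0)
| .inl (.inr a), .inl (.inl b) => !(b = 0 && a = 0)
| .inl (.inl a), .inr _ => a = 0
| .inr _, .inl (.inl a) => a = 0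
| .inl (.inr a), .inr _ => a = 0
| .inr _, .inl (.inr a) => a = 0
| _, _ => false

def e'AdjB : V7 → V7 → Bool
| .inl (.inl _), .inl (.inr _) => true
| .inl (.inr _), .inl (.inl _) => true
| .inl (.inl a), .inr _ => a = 0
| .inr _, .inl (.inl a) => a = 0
| _, _ => false

def E0 : SimpleGraph V7 where
  Adj x y := eAdjB x y = true
  symm := by constructor; intro x y; revert x y; decide
  loopless := by constructor; intro x; revert x; decide

def E'0 : SimpleGraph V7 where
  Adj x y := e'AdjB x y = true
  symm := by constructor; intro x y; revert x y; decide
  loopless := by constructor; intro x; revert x; decide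

instance : DecidableRel E0.Adj := fun x y => inferInstanceAs (Decidable (_ = true))
instance : DecidableRel E'0.Adj := fun x y => inferInstanceAs (Decidable (_ = true))
instance : DecidableRel K33.Adj := fun x y => inferInstanceAs (Decidable (_ ∨ _))

theorem E0_adj (x y : V7) : E0.Adj x y ↔ eAdjB x y = true := Iff.rfl
theorem E'0_adj (x y : V7) : E'0.Adj x y ↔ e'AdjB x y = true := Iff.rfl

set_option synthInstance.maxSize 2000 in
set_option synthInstance.maxHeartbeats 2000000 in
theorem Egraph_eq : Egraph = E0 := by
  ext x y
  revert x y
  simp only [E0_adj, Egraph, subdivide, SimpleGraph.fromEdgeSet_adj, Set.mem_union, Set.mem_image,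
    Set.mem_diff, Set.mem_singleton_iff, Set.mem_insert_iff, Sym2.exists, SimpleGraph.mem_edgeSet,
    Sym2.map_pair_eq, Sym2.eq_iff, K33, completeBipartiteGraph]
  decide

set_option synthInstance.maxSize 2000 in
set_option synthInstance.maxHeartbeats 2000000 in
theorem E'graph_eq : E'graph = E'0 := by
  ext x y
  revert x y
  simp only [E'0_adj, E'graph, SimpleGraph.fromEdgeSet_adj, Set.mem_union, Set.mem_image,
    Set.mem_singleton_iff, Sym2.exists, SimpleGraph.mem_edgeSet,
    Sym2.map_pair_eq, Sym2.eq_iff, K33, completeBipartiteGraph]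
  decide

theorem E0_connected : E0.Connected := by
  rw [SimpleGraph.connected_iff]
  exact ⟨by decide, ⟨Sum.inr ()⟩⟩

theorem E'0_connected : E'0.Connected := by
  rw [SimpleGraph.connected_iff]
  exact ⟨by decide, ⟨Sum.inr ()⟩⟩

/-! ### small helper lemmas -/

theorem induce_singleton_connected {V : Type} (G : SimpleGraph V) (a : V) :
    (G.induce {a}).Connected := by
  rw [SimpleGraph.connected_iff]
  refine ⟨fun x y => ?_, ⟨⟨a, rfl⟩⟩⟩
  have : x = y := Subtype.ext (x.2.trans y.2.symm)
  exact this ▸ SimpleGraph.Reachable.refl x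

theorem induce_pair_connected {V : Type} {G : SimpleGraph V} {a b : V} (h : G.Adj a b) :
    (G.induce {a, b}).Connected := by
  rw [SimpleGraph.connected_iff]
  have hab : (G.induce {a, b}).Adj ⟨a, Or.inl rfl⟩ ⟨b, Or.inr rfl⟩ := by
    simp [SimpleGraph.comap_adj, h]
  refine ⟨fun x y => ?_, ⟨⟨a, Or.inl rfl⟩⟩⟩
  have key : ∀ z : ({a, b} : Set V), z = ⟨a, Or.inl rfl⟩ ∨ z = ⟨b, Or.inr rfl⟩ := by
    rintro ⟨z, hz | hz⟩
    · exact Or.inl (Subtype.ext hz)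
    · exact Or.inr (Subtype.ext hz)
  rcases key x with rfl | rfl <;> rcases key y with rfl | rfl
  · exact SimpleGraph.Reachable.refl _
  · exact hab.reachable
  · exact hab.symm.reachable
  · exact SimpleGraph.Reachable.refl _

theorem adj_of_induce_pair_connected {V : Type} {G : SimpleGraph V} {a b : V} (hne : a ≠ b)
    (h : (G.induce {a, b}).Connected) : G.Adj a b := by
  have hr := h.preconnected ⟨a, Or.inl rfl⟩ ⟨b, Or.inr rfl⟩
  obtain ⟨p⟩ := hr
  have hnil : ¬ p.Nil := SimpleGraph.Walk.not_nil_of_ne (by intro hc; exact hne (congrArg Subtype.val hc))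
  have hadj : (G.induce {a, b}).Adj _ (p.getVert 1) := p.adj_snd hnil
  have hmem := (p.getVert 1).2
  rcases hmem with h1 | h1
  · exfalso
    have : (p.getVert 1) = ⟨a, Or.inl rfl⟩ := Subtype.ext h1
    rw [this] at hadj
    exact (G.induce {a, b}).irrefl hadj
  · have : (p.getVert 1) = ⟨b, Or.inr rfl⟩ := Subtype.ext h1
    rw [this] at hadj
    exact hadj

/-! ### K33 automorphisms -/

def k33Congr (e₁ e₂ : Fin 3 ≃ Fin 3) : K33 ≃g K33 :=
  ⟨Equiv.sumCongr e₁ e₂, by rintro (a | a) (b | b) <;> simp [K33]⟩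

def k33Swap : K33 ≃g K33 :=
  ⟨Equiv.sumComm _ _, by rintro (a | a) (b | b) <;> simp [K33, or_comm]⟩

theorem exists_aut_edge (w₁ w₂ : Fin 3 ⊕ Fin 3) (h : K33.Adj w₁ w₂) :
    ∃ ρ : K33 ≃g K33, ρ w₁ = Sum.inl 0 ∧ ρ w₂ = Sum.inr 0 := by
  rcases w₁ with i | i <;> rcases w₂ with j | j
  · simp [K33] at h
  · exact ⟨k33Congr (Equiv.swap i 0) (Equiv.swap j 0), by simp [k33Congr], by simp [k33Congr]⟩
  · refine ⟨k33Swap.trans (k33Congr (Equiv.swap i 0) (Equiv.swap j 0)), ?_, ?_⟩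
    · simp [k33Swap, k33Congr, RelIso.trans]
    · simp [k33Swap, k33Congr, RelIso.trans]
  · simp [K33] at h

/-! ### master iso lemmas -/

section Master

variable {V : Type} [Fintype V] [DecidableEq V] {G : SimpleGraph V}
variable {σ : Fin 3 ⊕ Fin 3 → V} {x₀ : V}

theorem card_V7 : Fintype.card V7 = 7 := by decide

theorem master_iso_E' (hcard : Fintype.card V = 7) (hσ : Function.Injective σ)
    (hx₀ : ∀ p, σ p ≠ x₀) (w' : Fin 3 ⊕ Fin 3)
    (hAdj : ∀ a b : V, G.Adj a b ↔
      ((∃ p q, K33.Adj p q ∧ s(a, b) = s(σ p, σ q)) ∨ s(a, b) = s(σ w', x₀))) :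
    Nonempty (G ≃g E'graph) := by
  obtain ⟨ρ, hρ⟩ : ∃ ρ : K33 ≃g K33, ρ w' = Sum.inl 0 := by
    rcases w' with i | i
    · exact ⟨k33Congr (Equiv.swap i 0) (Equiv.refl _), by simp [k33Congr]⟩
    · exact ⟨k33Swap.trans (k33Congr (Equiv.swap i 0) (Equiv.refl _)),
        by simp [k33Swap, k33Congr, RelIso.trans]⟩
  have hsym : ∀ (p t : Fin 3 ⊕ Fin 3), ρ.symm p = t ↔ p = ρ t := by
    intro p t
    constructor
    · rintro rfl; exact (ρ.apply_symm_apply p).symm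
    · rintro rfl; exact ρ.symm_apply_apply t
  have e'0_ll : ∀ p q : Fin 3 ⊕ Fin 3, E'0.Adj (.inl p) (.inl q) ↔ K33.Adj p q := by decide
  have e'0_lr : ∀ p : Fin 3 ⊕ Fin 3, E'0.Adj (.inl p) (.inr ()) ↔ p = .inl 0 := by decide
  have e'0_rl : ∀ p : Fin 3 ⊕ Fin 3, E'0.Adj (.inr ()) (.inl p) ↔ p = .inl 0 := by decide
  have main : ∀ a b : Fin 3 ⊕ Fin 3, G.Adj (σ a) (σ b) ↔ K33.Adj a b := by
    intro a b
    rw [hAdj]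
    constructor
    · rintro (⟨p, q, hpq, heq⟩ | heq) <;> rw [Sym2.eq_iff] at heq
      · rcases heq with ⟨h1, h2⟩ | ⟨h1, h2⟩
        · rw [hσ h1, hσ h2]; exact hpq
        · rw [hσ h1, hσ h2]; exact hpq.symm
      · rcases heq with ⟨h1, h2⟩ | ⟨h1, h2⟩
        · exact absurd h2 (hx₀ b)
        · exact absurd h1 (hx₀ a)
    · intro h; exact Or.inl ⟨a, b, h, rfl⟩
  have side : ∀ a : Fin 3 ⊕ Fin 3, G.Adj (σ a) x₀ ↔ a = w' := by
    intro a
    rw [hAdj]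
    constructor
    · rintro (⟨p, q, hpq, heq⟩ | heq) <;> rw [Sym2.eq_iff] at heq
      · rcases heq with ⟨h1, h2⟩ | ⟨h1, h2⟩
        · exact absurd h2.symm (hx₀ q)
        · exact absurd h2.symm (hx₀ p)
      · rcases heq with ⟨h1, h2⟩ | ⟨h1, h2⟩
        · exact hσ h1
        · exact absurd h2.symm (hx₀ w')
    · rintro rfl; exact Or.inr rfl
  have hdiag : ¬ G.Adj x₀ x₀ := G.loopless.irrefl x₀
  set f : V7 → V := fun x => match x with
    | .inl p => σ (ρ.symm p)
    | .inr _ => x₀ with hf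
  have hinj : Function.Injective f := by
    rintro (p | ⟨⟩) (q | ⟨⟩) hpq
    · exact congrArg (fun t => (Sum.inl t : V7)) (ρ.symm.injective (hσ hpq))
    · exact absurd hpq (hx₀ _)
    · exact absurd hpq.symm (hx₀ _)
    · rfl
  have hbij : Function.Bijective f :=
    (Fintype.bijective_iff_injective_and_card f).2 ⟨hinj, by rw [card_V7, hcard]⟩
  rw [E'graph_eq]
  refine ⟨(RelIso.mk (Equiv.ofBijective f hbij) ?_).symm⟩
  rintro (p | ⟨⟩) (q | ⟨⟩)
  · show G.Adj (σ (ρ.symm p)) (σ (ρ.symm q)) ↔ E'0.Adj (.inl p) (.inl q)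
    rw [main, e'0_ll]
    exact ρ.symm.map_rel_iff
  · show G.Adj (σ (ρ.symm p)) x₀ ↔ E'0.Adj (.inl p) (.inr ())
    rw [side, e'0_lr, hsym, hρ]
  · show G.Adj x₀ (σ (ρ.symm q)) ↔ E'0.Adj (.inr ()) (.inl q)
    rw [G.adj_comm, side, e'0_rl, hsym, hρ]
  · show G.Adj x₀ x₀ ↔ E'0.Adj (.inr ()) (.inr ())
    exact iff_of_false hdiag (by decide)

theorem master_iso_E (hcard : Fintype.card V = 7) (hσ : Function.Injective σ)
    (hx₀ : ∀ p, σ p ≠ x₀) {w₁ w₂ : Fin 3 ⊕ Fin 3} (hw : K33.Adj w₁ w₂)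
    (hAdj : ∀ a b : V, G.Adj a b ↔
      ((∃ p q, K33.Adj p q ∧ s(p, q) ≠ s(w₁, w₂) ∧ s(a, b) = s(σ p, σ q)) ∨
        s(a, b) = s(σ w₁, x₀) ∨ s(a, b) = s(σ w₂, x₀))) :
    Nonempty (G ≃g Egraph) := by
  obtain ⟨ρ, hρ₁, hρ₂⟩ := exists_aut_edge w₁ w₂ hw
  have hsym : ∀ (p t : Fin 3 ⊕ Fin 3), ρ.symm p = t ↔ p = ρ t := by
    intro p t
    constructor
    · rintro rfl; exact (ρ.apply_symm_apply p).symm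
    · rintro rfl; exact ρ.symm_apply_apply t
  have e0_ll : ∀ p q : Fin 3 ⊕ Fin 3,
      E0.Adj (.inl p) (.inl q) ↔ (K33.Adj p q ∧ s(p, q) ≠ s((Sum.inl 0 : Fin 3 ⊕ Fin 3), Sum.inr 0)) := by
    decide
  have e0_lr : ∀ p : Fin 3 ⊕ Fin 3,
      E0.Adj (.inl p) (.inr ()) ↔ (p = .inl 0 ∨ p = .inr 0) := by decide
  have e0_rl : ∀ p : Fin 3 ⊕ Fin 3,
      E0.Adj (.inr ()) (.inl p) ↔ (p = .inl 0 ∨ p = .inr 0) := by decide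
  have main : ∀ a b : Fin 3 ⊕ Fin 3,
      G.Adj (σ a) (σ b) ↔ (K33.Adj a b ∧ s(a, b) ≠ s(w₁, w₂)) := by
    intro a b
    rw [hAdj]
    constructor
    · rintro (⟨p, q, hpq, hne, heq⟩ | heq | heq) <;> rw [Sym2.eq_iff] at heq
      · rcases heq with ⟨h1, h2⟩ | ⟨h1, h2⟩
        · rw [hσ h1, hσ h2]; exact ⟨hpq, hne⟩
        · rw [hσ h1, hσ h2]
          refine ⟨hpq.symm, fun hc => hne ?_⟩
          rw [← hc, Sym2.eq_swap]
      · rcases heq with ⟨h1, h2⟩ | ⟨h1, h2⟩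
        · exact absurd h2 (hx₀ b)
        · exact absurd h1 (hx₀ a)
      · rcases heq with ⟨h1, h2⟩ | ⟨h1, h2⟩
        · exact absurd h2 (hx₀ b)
        · exact absurd h1 (hx₀ a)
    · rintro ⟨h1, h2⟩; exact Or.inl ⟨a, b, h1, h2, rfl⟩
  have side : ∀ a : Fin 3 ⊕ Fin 3, G.Adj (σ a) x₀ ↔ (a = w₁ ∨ a = w₂) := by
    intro a
    rw [hAdj]
    constructor
    · rintro (⟨p, q, hpq, hne, heq⟩ | heq | heq) <;> rw [Sym2.eq_iff] at heq
      · rcases heq with ⟨h1, h2⟩ | ⟨h1, h2⟩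
        · exact absurd h2.symm (hx₀ q)
        · exact absurd h2.symm (hx₀ p)
      · rcases heq with ⟨h1, h2⟩ | ⟨h1, h2⟩
        · exact Or.inl (hσ h1)
        · exact absurd h2.symm (hx₀ w₁)
      · rcases heq with ⟨h1, h2⟩ | ⟨h1, h2⟩
        · exact Or.inr (hσ h1)
        · exact absurd h2.symm (hx₀ w₂)
    · rintro (rfl | rfl)
      · exact Or.inr (Or.inl rfl)
      · exact Or.inr (Or.inr rfl)
  have hdiag : ¬ G.Adj x₀ x₀ := G.loopless.irrefl x₀
  set f : V7 → V := fun x => match x with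
    | .inl p => σ (ρ.symm p)
    | .inr _ => x₀ with hf
  have hinj : Function.Injective f := by
    rintro (p | ⟨⟩) (q | ⟨⟩) hpq
    · exact congrArg (fun t => (Sum.inl t : V7)) (ρ.symm.injective (hσ hpq))
    · exact absurd hpq (hx₀ _)
    · exact absurd hpq.symm (hx₀ _)
    · rfl
  have hbij : Function.Bijective f :=
    (Fintype.bijective_iff_injective_and_card f).2 ⟨hinj, by rw [card_V7, hcard]⟩
  have hkey : ∀ p q : Fin 3 ⊕ Fin 3,
      (s(ρ.symm p, ρ.symm q) = s(w₁, w₂)) ↔ s(p, q) = s((Sum.inl 0 : Fin 3 ⊕ Fin 3), Sum.inr 0) := by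
    intro p q
    rw [Sym2.eq_iff, Sym2.eq_iff]
    simp only [hsym, hρ₁, hρ₂]
  rw [Egraph_eq]
  refine ⟨(RelIso.mk (Equiv.ofBijective f hbij) ?_).symm⟩
  rintro (p | ⟨⟩) (q | ⟨⟩)
  · show G.Adj (σ (ρ.symm p)) (σ (ρ.symm q)) ↔ E0.Adj (.inl p) (.inl q)
    rw [main, e0_ll]
    constructor
    · rintro ⟨h1, h2⟩
      exact ⟨ρ.symm.map_rel_iff.mp h1, fun hc => h2 ((hkey p q).mpr hc)⟩
    · rintro ⟨h1, h2⟩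
      exact ⟨ρ.symm.map_rel_iff.mpr h1, fun hc => h2 ((hkey p q).mp hc)⟩
  · show G.Adj (σ (ρ.symm p)) x₀ ↔ E0.Adj (.inl p) (.inr ())
    rw [side, e0_lr, hsym, hsym, hρ₁, hρ₂]
  · show G.Adj x₀ (σ (ρ.symm q)) ↔ E0.Adj (.inr ()) (.inl q)
    rw [G.adj_comm, side, e0_rl, hsym, hsym, hρ₁, hρ₂]
  · show G.Adj x₀ x₀ ↔ E0.Adj (.inr ()) (.inr ())
    exact iff_of_false hdiag (by decide)

end Master

/-! ### orientation helper -/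

theorem orient_iff {V : Type} (σ : Fin 3 ⊕ Fin 3 → V) (a b : V) :
    (∃ i j : Fin 3, s(a, b) = s(σ (.inl i), σ (.inr j))) ↔
      (∃ p q, K33.Adj p q ∧ s(a, b) = s(σ p, σ q)) := by
  constructor
  · rintro ⟨i, j, h⟩
    exact ⟨.inl i, .inr j, by simp [K33], h⟩
  · rintro ⟨p, q, hpq, h⟩
    rcases p with i | i <;> rcases q with j | j
    · simp [K33] at hpq
    · exact ⟨i, j, h⟩
    · exact ⟨j, i, by rw [h, Sym2.eq_swap]⟩
    · simp [K33] at hpq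

theorem exists_neighbor {V : Type} [Fintype V] {G : SimpleGraph V} (hconn : G.Connected)
    (h2 : 1 < Fintype.card V) (v : V) : ∃ z, G.Adj v z := by
  obtain ⟨v', hne⟩ := Fintype.exists_ne_of_one_lt_card h2 v
  obtain ⟨p⟩ := hconn.preconnected v v'
  have hnil : ¬ p.Nil := SimpleGraph.Walk.not_nil_of_ne (Ne.symm hne)
  exact ⟨p.getVert 1, p.adj_snd hnil⟩

section Classify

variable {V : Type} [Fintype V] [DecidableEq V] {G : SimpleGraph V}

theorem classify_caseB (hcard : Fintype.card V = 7) (hconn : G.Connected)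
    (hedge : G.edgeSet.ncard = 10)
    {B : Fin 3 ⊕ Fin 3 → Set V}
    (hB3 : ∀ w₁ w₂, w₁ ≠ w₂ → Disjoint (B w₁) (B w₂))
    (hB4 : ∀ w₁ w₂, K33.Adj w₁ w₂ → ∃ u ∈ B w₁, ∃ x ∈ B w₂, G.Adj u x)
    {σ : Fin 3 ⊕ Fin 3 → V} (hmem : ∀ w, B w = {σ w}) :
    Nonempty (G ≃g E'graph) := by
  have hσ : Function.Injective σ := by
    intro w₁ w₂ h
    by_contra hne
    exact Set.disjoint_left.mp (hB3 w₁ w₂ hne)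
      (by rw [hmem]; exact rfl) (by rw [hmem, ← h]; exact rfl)
  have hedge9 : ∀ i j : Fin 3, G.Adj (σ (.inl i)) (σ (.inr j)) := by
    intro i j
    obtain ⟨u, hu, x, hx, hux⟩ := hB4 (.inl i) (.inr j) (by simp [K33])
    rw [hmem] at hu hx
    rw [← hu, ← hx]
    exact hux
  -- the unused vertex
  set R : Finset V := Finset.univ.image σ with hR
  have hRcard : R.card = 6 := by
    rw [hR, Finset.card_image_of_injective _ hσ]
    simp
  obtain ⟨w0, hw0⟩ : ∃ w0, Finset.univ \ R = {w0} := by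
    apply Finset.card_eq_one.mp
    rw [Finset.card_sdiff_of_subset (Finset.subset_univ R), hRcard, Finset.card_univ, hcard]
  have hw0R : w0 ∉ R := by
    have : w0 ∈ Finset.univ \ R := by rw [hw0]; exact Finset.mem_singleton_self w0
    exact (Finset.mem_sdiff.mp this).2
  have hx₀ : ∀ p, σ p ≠ w0 := by
    intro p hp
    exact hw0R (hp ▸ Finset.mem_image_of_mem σ (Finset.mem_univ p))
  -- neighbor of w0
  obtain ⟨z, hz⟩ := exists_neighbor hconn (by omega) w0
  obtain ⟨w', hw'⟩ : ∃ w', σ w' = z := by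
    have hzR : z ∈ R := by
      by_contra hzR
      have : z ∈ Finset.univ \ R := Finset.mem_sdiff.mpr ⟨Finset.mem_univ z, hzR⟩
      rw [hw0] at this
      exact G.ne_of_adj hz (Finset.mem_singleton.mp this).symm
    obtain ⟨w', _, hw'⟩ := Finset.mem_image.mp hzR
    exact ⟨w', hw'⟩
  -- the edge finset
  set T : Finset (Sym2 V) :=
    (Finset.univ : Finset (Fin 3 × Fin 3)).image
      (fun ij => s(σ (.inl ij.1), σ (.inr ij.2))) ∪ {s(σ w', w0)} with hTdef
  have hinjF : Function.Injective
      (fun ij : Fin 3 × Fin 3 => s(σ (.inl ij.1), σ (.inr ij.2))) := by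
    rintro ⟨i, j⟩ ⟨i', j'⟩ h
    simp only [Sym2.eq_iff] at h
    rcases h with ⟨h1, h2⟩ | ⟨h1, h2⟩
    · have e1 : (Sum.inl i : Fin 3 ⊕ Fin 3) = Sum.inl i' := hσ h1
      have e2 : (Sum.inr j : Fin 3 ⊕ Fin 3) = Sum.inr j' := hσ h2
      simp only [Sum.inl.injEq] at e1
      simp only [Sum.inr.injEq] at e2
      simp [e1, e2]
    · exact absurd (hσ h1) (by simp)
  have hextra : s(σ w', w0) ∉ (Finset.univ : Finset (Fin 3 × Fin 3)).image
      (fun ij => s(σ (.inl ij.1), σ (.inr ij.2))) := by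
    intro hmem'
    obtain ⟨⟨i, j⟩, _, h⟩ := Finset.mem_image.mp hmem'
    rw [Sym2.eq_iff] at h
    rcases h with ⟨h1, h2⟩ | ⟨h1, h2⟩
    · exact hx₀ _ h2
    · exact hx₀ _ h1
  have hTcard : T.card = 10 := by
    rw [hTdef, Finset.card_union_of_disjoint (Finset.disjoint_singleton_right.mpr hextra),
      Finset.card_image_of_injective _ hinjF]
    simp
  have hTsub : ↑T ⊆ G.edgeSet := by
    intro e he
    rw [Finset.mem_coe, hTdef, Finset.mem_union] at he
    rcases he with he | he
    · obtain ⟨⟨i, j⟩, _, h⟩ := Finset.mem_image.mp he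
      rw [← h]
      exact hedge9 i j
    · rw [Finset.mem_singleton.mp he]
      exact (hw' ▸ hz.symm)
  have hT : ↑T = G.edgeSet := by
    apply Set.eq_of_subset_of_ncard_le hTsub
    rw [hedge, Set.ncard_coe_finset, hTcard]
  have hAdjT : ∀ a b : V, G.Adj a b ↔ s(a, b) ∈ T := by
    intro a b
    rw [← SimpleGraph.mem_edgeSet, ← hT, Finset.mem_coe]
  apply master_iso_E' hcard hσ hx₀ w'
  intro a b
  rw [hAdjT a b, hTdef, Finset.mem_union, Finset.mem_singleton]
  constructor
  · rintro (h | h)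
    · obtain ⟨⟨i, j⟩, _, hh⟩ := Finset.mem_image.mp h
      exact Or.inl ((orient_iff σ a b).mp ⟨i, j, hh.symm⟩)
    · exact Or.inr h
  · rintro (h | h)
    · obtain ⟨i, j, hh⟩ := (orient_iff σ a b).mpr h
      exact Or.inl (Finset.mem_image.mpr ⟨⟨i, j⟩, Finset.mem_univ _, hh.symm⟩)
    · exact Or.inr h

theorem caseA_core (hcard : Fintype.card V = 7)
    {istar : Fin 3} {u u' : V} {σ : Fin 3 ⊕ Fin 3 → V} {d : Fin 3 → V}
    (hσ : Function.Injective σ) (hσi : σ (.inl istar) = u)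
    (hu' : ∀ p, σ p ≠ u')
    (hd : ∀ j, d j = u ∨ d j = u')
    (hk : (Finset.univ.filter (fun j => d j = u')).card ≤ 1)
    (hAdjT : ∀ a b : V, G.Adj a b ↔
      ((∃ i j : Fin 3, s(a, b) = s((if i = istar then d j else σ (.inl i)), σ (.inr j))) ∨
        s(a, b) = s(u, u'))) :
    Nonempty (G ≃g Egraph) ∨ Nonempty (G ≃g E'graph) := by
  rcases Nat.le_one_iff_eq_zero_or_eq_one.mp hk with hk0 | hk1
  · -- no edge uses u' : pendant, E' case
    right
    have hdu : ∀ j, d j = u := by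
      intro j
      rcases hd j with h | h
      · exact h
      · exact absurd (Finset.card_eq_zero.mp hk0 ▸ Finset.mem_filter.mpr
          ⟨Finset.mem_univ j, h⟩) (Finset.notMem_empty j)
    have hif : ∀ i j : Fin 3, (if i = istar then d j else σ (.inl i)) = σ (.inl i) := by
      intro i j
      split
      · next h => rw [hdu j, h, hσi]
      · rfl
    apply master_iso_E' hcard hσ hu' (.inl istar)
    intro a b
    rw [hAdjT a b]
    simp only [hif, hσi]
    rw [orient_iff σ a b]
  · -- exactly one edge uses u' : subdivision, E case
    left
    obtain ⟨j₀, hj₀⟩ := Finset.card_eq_one.mp hk1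
    have hdj₀ : d j₀ = u' := by
      have : j₀ ∈ Finset.univ.filter (fun j => d j = u') := by
        rw [hj₀]; exact Finset.mem_singleton_self j₀
      exact (Finset.mem_filter.mp this).2
    have hdu : ∀ j, j ≠ j₀ → d j = u := by
      intro j hj
      rcases hd j with h | h
      · exact h
      · exact absurd (Finset.mem_singleton.mp
          (hj₀ ▸ Finset.mem_filter.mpr ⟨Finset.mem_univ j, h⟩)) hj
    have hwadj : K33.Adj (.inl istar) (.inr j₀) := by simp [K33]
    apply master_iso_E hcard hσ hu' hwadj
    intro a b
    rw [hAdjT a b]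
    constructor
    · rintro (⟨i, j, h⟩ | h)
      · by_cases hij : i = istar ∧ j = j₀
        · obtain ⟨rfl, rfl⟩ := hij
          rw [if_pos rfl, hdj₀] at h
          refine Or.inr (Or.inr ?_)
          rw [h, Sym2.eq_swap]
        · have hterm : (if i = istar then d j else σ (.inl i)) = σ (.inl i) := by
            split
            · next hii =>
              subst hii
              have hjj : j ≠ j₀ := fun hc => hij ⟨rfl, hc⟩
              rw [hdu j hjj, hσi]
            · rfl
          rw [hterm] at h
          refine Or.inl ⟨.inl i, .inr j, by simp [K33], ?_, h⟩
          intro hc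
          rw [Sym2.eq_iff] at hc
          rcases hc with ⟨h1, h2⟩ | ⟨h1, h2⟩
          · exact hij ⟨Sum.inl.inj h1, Sum.inr.inj h2⟩
          · exact absurd h1 (by simp)
      · refine Or.inr (Or.inl ?_)
        rw [h, hσi]
    · rintro (⟨p, q, hpq, hne2, h⟩ | h | h)
      · rcases p with i | i <;> rcases q with j | j
        · simp [K33] at hpq
        · -- p = inl i, q = inr j
          have hij : ¬(i = istar ∧ j = j₀) := by
            rintro ⟨rfl, rfl⟩
            exact hne2 rfl
          refine Or.inl ⟨i, j, ?_⟩
          rw [h]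
          congr 1
          split
          · next hii =>
            subst hii
            have hjj : j ≠ j₀ := fun hc => hij ⟨rfl, hc⟩
            rw [hdu j hjj, hσi]
          · rfl
        · -- p = inr j, q = inl i  (note: names swapped by rcases)
          have hij : ¬(j = istar ∧ i = j₀) := by
            rintro ⟨rfl, rfl⟩
            exact hne2 (Sym2.eq_swap)
          refine Or.inl ⟨j, i, ?_⟩
          rw [h, Sym2.eq_swap]
          congr 1
          split
          · next hii =>
            subst hii
            have hjj : i ≠ j₀ := fun hc => hij ⟨rfl, hc⟩
            rw [hdu i hjj, hσi]
          · rfl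
        · simp [K33] at hpq
      · rw [hσi] at h
        exact Or.inr h
      · refine Or.inl ⟨istar, j₀, ?_⟩
        rw [h, if_pos rfl, hdj₀, Sym2.eq_swap]

theorem classify_caseA (hcard : Fintype.card V = 7) (hedge : G.edgeSet.ncard = 10)
    {B : Fin 3 ⊕ Fin 3 → Set V}
    (hB2 : ∀ w, (G.induce (B w)).Connected)
    (hB3 : ∀ w₁ w₂, w₁ ≠ w₂ → Disjoint (B w₁) (B w₂))
    (hB4 : ∀ w₁ w₂, K33.Adj w₁ w₂ → ∃ u ∈ B w₁, ∃ x ∈ B w₂, G.Adj u x)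
    {istar : Fin 3} {u u' : V} (hne : u ≠ u') (hBig : B (.inl istar) = {u, u'})
    {σ0 : Fin 3 ⊕ Fin 3 → V} (hmem : ∀ w, w ≠ .inl istar → B w = {σ0 w}) :
    Nonempty (G ≃g Egraph) ∨ Nonempty (G ≃g E'graph) := by
  have hclass : ∀ v w w', v ∈ B w → v ∈ B w' → w = w' := by
    intro v w w' h1 h2
    by_contra hc
    exact Set.disjoint_left.mp (hB3 w w' hc) h1 h2
  have hσ0mem : ∀ w, w ≠ .inl istar → σ0 w ∈ B w := by
    intro w hw
    rw [hmem w hw]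
    rfl
  have huB : u ∈ B (.inl istar) := by rw [hBig]; exact Or.inl rfl
  have hu'B : u' ∈ B (.inl istar) := by rw [hBig]; exact Or.inr rfl
  have huu' : G.Adj u u' := adj_of_induce_pair_connected hne (hBig ▸ hB2 (.inl istar))
  have H : ∀ j : Fin 3, ∃ a, (a = u ∨ a = u') ∧ G.Adj a (σ0 (.inr j)) := by
    intro j
    obtain ⟨a, ha, b, hb, hab⟩ := hB4 (.inl istar) (.inr j) (by simp [K33])
    rw [hBig] at ha
    rw [hmem _ (by simp)] at hb
    rcases ha with ha | ha
    · exact ⟨a, Or.inl ha, hb ▸ hab⟩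
    · exact ⟨a, Or.inr ha, hb ▸ hab⟩
  choose d hd1 hd2 using H
  have hdB : ∀ j, d j ∈ B (.inl istar) := by
    intro j
    rcases hd1 j with h | h <;> rw [h]
    · exact huB
    · exact hu'B
  have h6 : ∀ i j : Fin 3, i ≠ istar → G.Adj (σ0 (.inl i)) (σ0 (.inr j)) := by
    intro i j hi
    obtain ⟨a, ha, b, hb, hab⟩ := hB4 (.inl i) (.inr j) (by simp [K33])
    rw [hmem _ (by simp [hi])] at ha
    rw [hmem _ (by simp)] at hb
    have ha' : a = σ0 (.inl i) := ha
    have hb' : b = σ0 (.inr j) := hb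
    rw [ha', hb'] at hab
    exact hab
  set eF : Fin 3 → Fin 3 → V := fun i j => if i = istar then d j else σ0 (.inl i) with heF
  have heFB : ∀ i j, eF i j ∈ B (.inl i) := by
    intro i j
    rw [heF]
    dsimp only
    split
    · next h => rw [h]; exact hdB j
    · next h => exact hσ0mem _ (by simp [h])
  set T : Finset (Sym2 V) :=
    (Finset.univ : Finset (Fin 3 × Fin 3)).image
      (fun ij => s(eF ij.1 ij.2, σ0 (.inr ij.2))) ∪ {s(u, u')} with hTdef
  have hinjF : Function.Injective
      (fun ij : Fin 3 × Fin 3 => s(eF ij.1 ij.2, σ0 (.inr ij.2))) := by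
    rintro ⟨i, j⟩ ⟨i', j'⟩ h
    simp only [Sym2.eq_iff] at h
    rcases h with ⟨h1, h2⟩ | ⟨h1, h2⟩
    · have e1 : (Sum.inl i : Fin 3 ⊕ Fin 3) = Sum.inl i' :=
        hclass _ _ _ (heFB i j) (h1 ▸ heFB i' j')
      have e2 : (Sum.inr j : Fin 3 ⊕ Fin 3) = Sum.inr j' :=
        hclass _ _ _ (hσ0mem _ (by simp)) (h2 ▸ hσ0mem _ (by simp))
      simp only [Sum.inl.injEq] at e1
      simp only [Sum.inr.injEq] at e2
      simp [e1, e2]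
    · exact absurd (hclass _ _ _ (heFB i j) (h1 ▸ hσ0mem _ (by simp))) (by simp)
  have hextra : s(u, u') ∉ (Finset.univ : Finset (Fin 3 × Fin 3)).image
      (fun ij => s(eF ij.1 ij.2, σ0 (.inr ij.2))) := by
    intro hmem'
    obtain ⟨⟨i, j⟩, _, h⟩ := Finset.mem_image.mp hmem'
    rw [Sym2.eq_iff] at h
    rcases h with ⟨h1, h2⟩ | ⟨h1, h2⟩
    · have hmem2 : u' ∈ B (.inr j) := h2 ▸ hσ0mem _ (by simp)
      exact absurd (hclass _ _ _ hmem2 hu'B) (by simp)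
    · have hmem2 : u ∈ B (.inr j) := h2 ▸ hσ0mem _ (by simp)
      exact absurd (hclass _ _ _ hmem2 huB) (by simp)
  have hTcard : T.card = 10 := by
    rw [hTdef, Finset.card_union_of_disjoint (Finset.disjoint_singleton_right.mpr hextra),
      Finset.card_image_of_injective _ hinjF]
    simp
  have hTsub : ↑T ⊆ G.edgeSet := by
    intro e he
    rw [Finset.mem_coe, hTdef, Finset.mem_union] at he
    rcases he with he | he
    · obtain ⟨⟨i, j⟩, _, h⟩ := Finset.mem_image.mp he
      rw [← h]
      show G.Adj (eF i j) (σ0 (.inr j))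
      rw [heF]
      dsimp only
      split
      · exact hd2 j
      · next hii => exact h6 i j hii
    · rw [Finset.mem_singleton.mp he]
      exact huu'
  have hT : ↑T = G.edgeSet := by
    apply Set.eq_of_subset_of_ncard_le hTsub
    rw [hedge, Set.ncard_coe_finset, hTcard]
  have hAdjT' : ∀ a b : V, G.Adj a b ↔
      ((∃ i j : Fin 3, s(a, b) = s(eF i j, σ0 (.inr j))) ∨ s(a, b) = s(u, u')) := by
    intro a b
    rw [← SimpleGraph.mem_edgeSet, ← hT, Finset.mem_coe, hTdef, Finset.mem_union,
      Finset.mem_singleton]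
    constructor
    · rintro (h | h)
      · obtain ⟨⟨i, j⟩, _, hh⟩ := Finset.mem_image.mp h
        exact Or.inl ⟨i, j, hh.symm⟩
      · exact Or.inr h
    · rintro (⟨i, j, hh⟩ | h)
      · exact Or.inl (Finset.mem_image.mpr ⟨⟨i, j⟩, Finset.mem_univ _, hh.symm⟩)
      · exact Or.inr h
  -- injectivity facts for the updated maps
  have hinjσ : ∀ v0 : V, v0 ∈ B (.inl istar) →
      Function.Injective (Function.update σ0 (.inl istar) v0) := by
    intro v0 hv0 w₁ w₂ h
    have hval : ∀ w, Function.update σ0 (.inl istar) v0 w ∈ B w := by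
      intro w
      rcases eq_or_ne w (.inl istar) with rfl | hw
      · rw [Function.update_self]; exact hv0
      · rw [Function.update_of_ne hw]; exact hσ0mem w hw
    exact hclass _ _ _ (hval w₁) (h ▸ hval w₂)
  have hne' : ∀ (v0 v1 : V), v0 ∈ B (.inl istar) → v1 ∈ B (.inl istar) → v0 ≠ v1 →
      ∀ p, Function.update σ0 (.inl istar) v0 p ≠ v1 := by
    intro v0 v1 hv0 hv1 hvne p h
    rcases eq_or_ne p (.inl istar) with rfl | hp
    · rw [Function.update_self] at h; exact hvne h
    · rw [Function.update_of_ne hp] at h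
      exact hp (hclass _ _ _ (h ▸ hσ0mem p hp) hv1)
  have hupd_if : ∀ (v0 : V) (i j : Fin 3),
      (if i = istar then d j else Function.update σ0 (.inl istar) v0 (.inl i)) = eF i j := by
    intro v0 i j
    rw [heF]
    dsimp only
    split
    · rfl
    · next h => rw [Function.update_of_ne (by simpa using h)]
  have hupd_r : ∀ (v0 : V) (j : Fin 3),
      Function.update σ0 (.inl istar) v0 (.inr j) = σ0 (.inr j) :=
    fun v0 j => Function.update_of_ne (by simp) _ _
  by_cases hk : (Finset.univ.filter (fun j => d j = u')).card ≤ 1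
  · apply caseA_core hcard (hinjσ u huB) (Function.update_self _ _ _)
      (hne' u u' huB hu'B hne) hd1 hk
    intro a b
    rw [hAdjT' a b]
    simp only [hupd_if u, hupd_r u]
  · have hpart : (Finset.univ.filter (fun j => d j = u)).card +
        (Finset.univ.filter (fun j => d j = u')).card = 3 := by
      have hcongr : Finset.univ.filter (fun j => d j = u') =
          Finset.univ.filter (fun j => ¬ d j = u) := by
        apply Finset.filter_congr
        intro j _
        constructor
        · intro h hc
          exact hne (hc.symm.trans h)
        · intro h
          rcases hd1 j with h1 | h1
          · exact absurd h1 h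
          · exact h1
      rw [hcongr, Finset.card_filter_add_card_filter_not]
      simp
    have hk' : (Finset.univ.filter (fun j => d j = u)).card ≤ 1 := by omega
    have hd1' : ∀ j, d j = u' ∨ d j = u := fun j => (hd1 j).symm
    apply caseA_core hcard (hinjσ u' hu'B) (Function.update_self _ _ _)
      (hne' u' u hu'B huB hne.symm) hd1' hk'
    intro a b
    rw [hAdjT' a b]
    simp only [hupd_if u', hupd_r u', show s(u, u') = s(u', u) from Sym2.eq_swap]

end Classify

/-! ### minor witnesses and final assembly -/

def BF : Fin 3 ⊕ Fin 3 → Finset V7 := fun w =>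
  if w = .inl 0 then {Sum.inl (Sum.inl 0), Sum.inr ()} else {Sum.inl w}

theorem isMinor_E0 : IsMinor K33 E0 := by
  refine ⟨fun w => ↑(BF w), ?_, ?_, ?_, ?_⟩
  · intro w
    show (↑(BF w) : Set V7).Nonempty
    rw [Finset.coe_nonempty]
    revert w
    decide
  · intro w
    show (SimpleGraph.induce (↑(BF w) : Set V7) _).Connected
    by_cases h : w = .inl 0
    · subst h
      have hc : (BF (.inl 0) : Set V7) = {Sum.inl (Sum.inl 0), Sum.inr ()} := by simp [BF]
      rw [hc]
      exact induce_pair_connected (by decide)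
    · have hc : (↑(BF w) : Set V7) = {Sum.inl w} := by simp [BF, h]
      rw [hc]
      exact induce_singleton_connected _ _
  · have key : ∀ w₁ w₂ : Fin 3 ⊕ Fin 3, w₁ ≠ w₂ → ∀ a ∈ BF w₁, a ∉ BF w₂ := by decide
    intro w₁ w₂ hne
    rw [Finset.disjoint_coe]
    exact Finset.disjoint_left.mpr (key w₁ w₂ hne)
  · have key : ∀ w₁ w₂, K33.Adj w₁ w₂ → ∃ u ∈ BF w₁, ∃ x ∈ BF w₂, E0.Adj u x := by decide
    intro w₁ w₂ h
    simpa only [Finset.mem_coe] using key w₁ w₂ h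

theorem isMinor_E'0 : IsMinor K33 E'0 := by
  refine ⟨fun w => ↑(BF w), ?_, ?_, ?_, ?_⟩
  · intro w
    show (↑(BF w) : Set V7).Nonempty
    rw [Finset.coe_nonempty]
    revert w
    decide
  · intro w
    show (SimpleGraph.induce (↑(BF w) : Set V7) _).Connected
    by_cases h : w = .inl 0
    · subst h
      have hc : (BF (.inl 0) : Set V7) = {Sum.inl (Sum.inl 0), Sum.inr ()} := by simp [BF]
      rw [hc]
      exact induce_pair_connected (by decide)
    · have hc : (↑(BF w) : Set V7) = {Sum.inl w} := by simp [BF, h]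
      rw [hc]
      exact induce_singleton_connected _ _
  · have key : ∀ w₁ w₂ : Fin 3 ⊕ Fin 3, w₁ ≠ w₂ → ∀ a ∈ BF w₁, a ∉ BF w₂ := by decide
    intro w₁ w₂ hne
    rw [Finset.disjoint_coe]
    exact Finset.disjoint_left.mpr (key w₁ w₂ hne)
  · have key : ∀ w₁ w₂, K33.Adj w₁ w₂ → ∃ u ∈ BF w₁, ∃ x ∈ BF w₂, E'0.Adj u x := by decide
    intro w₁ w₂ h
    simpa only [Finset.mem_coe] using key w₁ w₂ h

/-- Up to isomorphism, there are exactly two connected simple graphs with 7 vertices and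
10 edges that have `K₃,₃` as a minor: the graph `E` obtained from `K₃,₃` by subdividing one
edge once, and the graph `E′` obtained from `K₃,₃` by attaching one pendant vertex. -/
theorem two_graphs_with_7_vertices_10_edges_K33_minor :
    IsEmpty (Egraph ≃g E'graph) ∧
    (Egraph.Connected ∧ Egraph.edgeSet.ncard = 10 ∧ IsMinor K33 Egraph) ∧
    (E'graph.Connected ∧ E'graph.edgeSet.ncard = 10 ∧ IsMinor K33 E'graph) ∧
    (∀ (V : Type) [Fintype V], Fintype.card V = 7 →
      ∀ G : SimpleGraph V, G.Connected → G.edgeSet.ncard = 10 → IsMinor K33 G →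
        Nonempty (G ≃g Egraph) ∨ Nonempty (G ≃g E'graph)) := by
  refine ⟨?_, ⟨?_, ?_, ?_⟩, ⟨?_, ?_, ?_⟩, ?_⟩
  · refine ⟨fun φ => ?_⟩
    have φ' : E0 ≃g E'0 := by rw [← Egraph_eq, ← E'graph_eq]; exact φ
    have hdeg := Fintype.card_congr (φ'.mapNeighborSet (φ'.symm (Sum.inr ())))
    rw [RelIso.apply_symm_apply] at hdeg
    have h1 : ∀ v : V7, Fintype.card (E0.neighborSet v) ≠ 1 := by decide
    have h2 : Fintype.card (E'0.neighborSet (Sum.inr ())) = 1 := by decide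
    exact h1 _ (hdeg.trans h2)
  · rw [Egraph_eq]; exact E0_connected
  · rw [Egraph_eq, ← SimpleGraph.coe_edgeFinset, Set.ncard_coe_finset]; decide
  · rw [Egraph_eq]; exact isMinor_E0
  · rw [E'graph_eq]; exact E'0_connected
  · rw [E'graph_eq, ← SimpleGraph.coe_edgeFinset, Set.ncard_coe_finset]; decide
  · rw [E'graph_eq]; exact isMinor_E'0
  · intro V _ hcard G hconn hedge hminor
    classical
    obtain ⟨B, hB1, hB2, hB3, hB4⟩ := hminor
    set C : Fin 3 ⊕ Fin 3 → Finset V := fun w => (B w).toFinite.toFinset with hC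
    have hCmem : ∀ w v, v ∈ C w ↔ v ∈ B w := fun w v => Set.Finite.mem_toFinset _
    have hCcoe : ∀ w, ↑(C w) = B w := fun w => Set.Finite.coe_toFinset _
    have hCpos : ∀ w, 1 ≤ (C w).card := by
      intro w
      obtain ⟨v, hv⟩ := hB1 w
      exact Finset.card_pos.mpr ⟨v, (hCmem w v).mpr hv⟩
    have hCdisj : ∀ w₁ w₂ : Fin 3 ⊕ Fin 3, w₁ ≠ w₂ → Disjoint (C w₁) (C w₂) := by
      intro w₁ w₂ hne
      rw [Finset.disjoint_left]
      intro a h1 h2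
      exact Set.disjoint_left.mp (hB3 w₁ w₂ hne) ((hCmem _ _).mp h1) ((hCmem _ _).mp h2)
    have hsum : ∑ w : Fin 3 ⊕ Fin 3, (C w).card ≤ 7 := by
      rw [← Finset.card_biUnion (fun w _ w' _ h => hCdisj w w' h)]
      calc (Finset.univ.biUnion C).card ≤ Fintype.card V := Finset.card_le_univ _
        _ = 7 := hcard
    set σ : Fin 3 ⊕ Fin 3 → V := fun w => (hB1 w).choose with hσdef
    have hBσ : ∀ w, σ w ∈ B w := fun w => (hB1 w).choose_spec
    have hsing : ∀ w, (C w).card = 1 → B w = {σ w} := by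
      intro w h1
      obtain ⟨a, ha⟩ := Finset.card_eq_one.mp h1
      have hBa : B w = {a} := by rw [← hCcoe w, ha]; simp
      have hmem : σ w = a := Set.mem_singleton_iff.mp (hBa ▸ hBσ w)
      rw [hBa, hmem]
    by_cases hall : ∀ w, (C w).card = 1
    · right
      exact classify_caseB hcard hconn hedge hB3 hB4 (fun w => hsing w (hall w))
    · push_neg at hall
      obtain ⟨wstar, hwstar⟩ := hall
      have hsum_erase : ∀ w₀ : Fin 3 ⊕ Fin 3, ∑ w, (C w).card =
          (C w₀).card + ∑ w ∈ Finset.univ.erase w₀, (C w).card := by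
        intro w₀
        exact (Finset.add_sum_erase _ _ (Finset.mem_univ w₀)).symm
      have hone : ∀ w, w ≠ wstar → (C w).card = 1 := by
        intro w hw
        by_contra hc
        have h2w : 2 ≤ (C w).card := by have := hCpos w; omega
        have h2s : 2 ≤ (C wstar).card := by have := hCpos wstar; omega
        have e1 := hsum_erase wstar
        have e2 : ∑ x ∈ Finset.univ.erase wstar, (C x).card =
            (C w).card + ∑ x ∈ (Finset.univ.erase wstar).erase w, (C x).card :=
          (Finset.add_sum_erase _ _ (Finset.mem_erase.mpr ⟨hw, Finset.mem_univ w⟩)).symm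
        have e3 : ((Finset.univ.erase wstar).erase w).card • 1 ≤
            ∑ x ∈ (Finset.univ.erase wstar).erase w, (C x).card :=
          Finset.card_nsmul_le_sum _ _ _ (fun x _ => hCpos x)
        have e4 : ((Finset.univ.erase wstar).erase w).card = 4 := by
          rw [Finset.card_erase_of_mem (Finset.mem_erase.mpr ⟨hw, Finset.mem_univ w⟩),
            Finset.card_erase_of_mem (Finset.mem_univ wstar)]
          simp
        rw [e4] at e3
        simp only [smul_eq_mul, mul_one] at e3
        omega
      have hc2 : (C wstar).card = 2 := by
        have h2s : 2 ≤ (C wstar).card := by have := hCpos wstar; omega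
        have e1 := hsum_erase wstar
        have e3 : (Finset.univ.erase wstar).card • 1 ≤
            ∑ x ∈ Finset.univ.erase wstar, (C x).card :=
          Finset.card_nsmul_le_sum _ _ _ (fun x _ => hCpos x)
        have e4 : (Finset.univ.erase wstar).card = 5 := by
          rw [Finset.card_erase_of_mem (Finset.mem_univ wstar)]
          simp
        rw [e4] at e3
        simp only [smul_eq_mul, mul_one] at e3
        omega
      obtain ⟨u, u', hneuu, hCW⟩ := Finset.card_eq_two.mp hc2
      have hBig : B wstar = {u, u'} := by
        rw [← hCcoe wstar, hCW]
        simp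
      have hmemS : ∀ w, w ≠ wstar → B w = {σ w} := fun w hw => hsing w (hone w hw)
      rcases wstar with istar | jstar
      · exact classify_caseA hcard hedge hB2 hB3 hB4 hneuu hBig hmemS
      · have hswapadj : ∀ w₁ w₂ : Fin 3 ⊕ Fin 3, K33.Adj w₁ w₂ → K33.Adj w₁.swap w₂.swap := by
          decide
        exact classify_caseA hcard hedge (B := fun w => B w.swap)
          (fun w => hB2 w.swap)
          (fun w₁ w₂ hne => hB3 _ _ (fun hc => hne (by
            rw [← Sum.swap_swap w₁, hc, Sum.swap_swap])))
          (fun w₁ w₂ h => hB4 _ _ (hswapadj _ _ h)) hneuu (by simpa using hBig)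
          (σ0 := fun w => σ w.swap)
          (fun w hw => hmemS w.swap (fun hc => hw (by
            rw [← Sum.swap_swap w, hc]; rfl)))
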